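/- arXiv:2202.10797 — 3 statements merged into one kernel-verified Lean document; each statement's English description precedes it below -/
import Mathlib

section
/- The series 1 − 1/2² + 1/4² − 1/5² + 1/7² − 1/8² + ⋯ (terms 1/n² over n not divisible by 3, with alternating signs) converges, and its reciprocal D₃(∞) satisfies 1.27 < D₃(∞) < 1.29. -/
open scoped Real

noncomputable def coxf (k : ℕ) : ℝ :=
  1 / ((6 * k + 1 : ℝ)) ^ 2 - 1 / ((6 * k + 2 : ℝ)) ^ 2
    + 1 / ((6 * k + 4 : ℝ)) ^ 2 - 1 / ((6 * k + 5 : ℝ)) ^ 2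

lemma coxf_nonneg (k : ℕ) : 0 ≤ coxf k := by
  have hx : (0:ℝ) ≤ (k:ℝ) := k.cast_nonneg
  have h1 : 1 / ((6 * k + 2 : ℝ)) ^ 2 ≤ 1 / ((6 * k + 1 : ℝ)) ^ 2 :=
    one_div_le_one_div_of_le (by positivity) (by nlinarith)
  have h2 : 1 / ((6 * k + 5 : ℝ)) ^ 2 ≤ 1 / ((6 * k + 4 : ℝ)) ^ 2 :=
    one_div_le_one_div_of_le (by positivity) (by nlinarith)
  unfold coxf; linarith

lemma coxf_le (k : ℕ) : coxf k ≤ 1 / ((k:ℝ) + 1) ^ 2 := by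
  have hx : (0:ℝ) ≤ (k:ℝ) := k.cast_nonneg
  have h1 : 1 / ((6 * k + 4 : ℝ)) ^ 2 ≤ 1 / ((6 * k + 2 : ℝ)) ^ 2 :=
    one_div_le_one_div_of_le (by positivity) (by nlinarith)
  have h2 : (0:ℝ) ≤ 1 / ((6 * k + 5 : ℝ)) ^ 2 := by positivity
  have h3 : 1 / ((6 * k + 1 : ℝ)) ^ 2 ≤ 1 / ((k:ℝ) + 1) ^ 2 :=
    one_div_le_one_div_of_le (by positivity) (by nlinarith)
  unfold coxf; linarith

lemma coxf_summable : Summable coxf := by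
  have h0 : Summable (fun n : ℕ => 1 / (n:ℝ) ^ 2) := Real.summable_one_div_nat_pow.mpr one_lt_two
  have h1 : Summable (fun n : ℕ => 1 / ((n:ℝ) + 1) ^ 2) := by
    have := (summable_nat_add_iff (f := fun n : ℕ => 1 / (n:ℝ) ^ 2) 1).mpr h0
    convert this using 2 with n
    · rfl
    push_cast
    ring
  exact Summable.of_nonneg_of_le coxf_nonneg coxf_le h1

lemma coxf_tel (k : ℕ) (hk : 1 ≤ k) : coxf k ≤ 1 / (36 * (k:ℝ) ^ 2) - 1 / (36 * ((k:ℝ) + 1) ^ 2) := by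
  have hx : (1:ℝ) ≤ (k:ℝ) := by exact_mod_cast hk
  set x : ℝ := (k:ℝ) with hxdef
  have hx0 : (0:ℝ) < x := by linarith
  -- drop middle terms
  have hmid : 1 / ((6 * k + 4 : ℝ)) ^ 2 ≤ 1 / ((6 * k + 2 : ℝ)) ^ 2 :=
    one_div_le_one_div_of_le (by positivity) (by nlinarith)
  have hstep : 1 / ((6 * k + 1 : ℝ)) ^ 2 - 1 / ((6 * k + 5 : ℝ)) ^ 2
      ≤ 1 / (36 * x ^ 2) - 1 / (36 * (x + 1) ^ 2) := by
    have ha : (0:ℝ) < (6 * x + 1) ^ 2 := by positivity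
    have hb : (0:ℝ) < (6 * x + 5) ^ 2 := by positivity
    have hc : (0:ℝ) < 36 * x ^ 2 := by positivity
    have hd : (0:ℝ) < 36 * (x + 1) ^ 2 := by positivity
    rw [div_sub_div _ _ (ne_of_gt ha) (ne_of_gt hb), div_sub_div _ _ (ne_of_gt hc) (ne_of_gt hd),
      div_le_div_iff₀ (by positivity) (by positivity)]
    have key : (36 * x ^ 2 + 36 * x) ^ 2 ≤ ((6 * x + 1) * (6 * x + 5)) ^ 2 := by nlinarith
    nlinarith [mul_pos hx0 (by linarith : (0:ℝ) < x + 1), sq_nonneg (x * (x+1)), key,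
      mul_le_mul_of_nonneg_left key (by linarith : (0:ℝ) ≤ 2 * x + 1)]
  unfold coxf; linarith

noncomputable def coxC : ℝ := (∑ k ∈ Finset.range 3, coxf k) + 1 / 324

lemma coxf_sum_bound (n : ℕ) :
    ∑ k ∈ Finset.range (n + 3), coxf k ≤ coxC - 1 / (36 * ((n:ℝ) + 3) ^ 2) := by
  induction n with
  | zero => simp [coxC]; norm_num
  | succ m ih =>
    rw [show m + 1 + 3 = (m + 3) + 1 by ring, Finset.sum_range_succ]
    have ht := coxf_tel (m + 3) (by omega)
    have hc : ((m + 3 : ℕ) : ℝ) = (m:ℝ) + 3 := by push_cast; ring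
    rw [hc] at ht
    push_cast
    push_cast at ih
    have he : (36 * ((m:ℝ) + 1 + 3) ^ 2) = (36 * ((m:ℝ) + 3 + 1) ^ 2) := by ring
    rw [he]
    linarith

lemma coxf_tsum_le : ∑' k, coxf k ≤ coxC := by
  refine Summable.tsum_le_of_sum_le coxf_summable (fun s => ?_)
  set n : ℕ := s.sup id with hn
  have hsub : s ⊆ Finset.range (n + 3) := by
    intro i hi
    have : i ≤ n := Finset.le_sup (f := (id : ℕ → ℕ)) hi
    exact Finset.mem_range.mpr (by omega)
  calc ∑ i ∈ s, coxf i ≤ ∑ k ∈ Finset.range (n + 3), coxf k :=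
        Finset.sum_le_sum_of_subset_of_nonneg hsub (fun i _ _ => coxf_nonneg i)
    _ ≤ coxC - 1 / (36 * ((n : ℝ) + 3) ^ 2) := coxf_sum_bound n
    _ ≤ coxC := by
        have : (0:ℝ) < 1 / (36 * ((n : ℝ) + 3) ^ 2) := by positivity
        linarith

lemma coxf_tsum_lb : (1:ℝ)/1.29 < ∑' k, coxf k := by
  have h := Summable.sum_le_tsum (Finset.range 3) (fun i _ => coxf_nonneg i) coxf_summable
  have hval : ∑ k ∈ Finset.range 3, coxf k =
      1/1^2 - 1/2^2 + 1/4^2 - 1/5^2 + (1/7^2 - 1/8^2 + 1/10^2 - 1/11^2)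
        + (1/13^2 - 1/14^2 + 1/16^2 - 1/17^2) := by
    simp [Finset.sum_range_succ, coxf]
    norm_num
  rw [hval] at h
  calc (1:ℝ)/1.29 < 1/1^2 - 1/2^2 + 1/4^2 - 1/5^2 + (1/7^2 - 1/8^2 + 1/10^2 - 1/11^2)
        + (1/13^2 - 1/14^2 + 1/16^2 - 1/17^2) := by norm_num
    _ ≤ _ := h

lemma coxf_tsum_ub : ∑' k, coxf k < 1/1.27 := by
  refine lt_of_le_of_lt coxf_tsum_le ?_
  have hval : coxC = 1/1^2 - 1/2^2 + 1/4^2 - 1/5^2 + (1/7^2 - 1/8^2 + 1/10^2 - 1/11^2)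
        + (1/13^2 - 1/14^2 + 1/16^2 - 1/17^2) + 1/324 := by
    simp [coxC, Finset.sum_range_succ, coxf]
    norm_num
  rw [hval]; norm_num

/-- Coxeter's horoball covering density series: the series
`T = Σ_{k≥0} [1/(6k+1)² − 1/(6k+2)² + 1/(6k+4)² − 1/(6k+5)²]` converges and
`D₃(∞) = 1/T` satisfies `1.27 < D₃(∞) < 1.29`. -/
theorem coxeter_covering_density_bounds :
    Summable (fun k : ℕ =>
      1 / ((6 * k + 1 : ℝ)) ^ 2 - 1 / ((6 * k + 2 : ℝ)) ^ 2
        + 1 / ((6 * k + 4 : ℝ)) ^ 2 - 1 / ((6 * k + 5 : ℝ)) ^ 2) ∧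
    1.27 < (∑' k : ℕ,
      (1 / ((6 * k + 1 : ℝ)) ^ 2 - 1 / ((6 * k + 2 : ℝ)) ^ 2
        + 1 / ((6 * k + 4 : ℝ)) ^ 2 - 1 / ((6 * k + 5 : ℝ)) ^ 2))⁻¹ ∧
    (∑' k : ℕ,
      (1 / ((6 * k + 1 : ℝ)) ^ 2 - 1 / ((6 * k + 2 : ℝ)) ^ 2
        + 1 / ((6 * k + 4 : ℝ)) ^ 2 - 1 / ((6 * k + 5 : ℝ)) ^ 2))⁻¹ < 1.29 := by
  have hTfun : (fun k : ℕ =>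
      1 / ((6 * k + 1 : ℝ)) ^ 2 - 1 / ((6 * k + 2 : ℝ)) ^ 2
        + 1 / ((6 * k + 4 : ℝ)) ^ 2 - 1 / ((6 * k + 5 : ℝ)) ^ 2) = coxf := rfl
  rw [hTfun]
  have hpos : (0:ℝ) < ∑' k, coxf k := lt_trans (by norm_num) coxf_tsum_lb
  refine ⟨coxf_summable, ?_, ?_⟩
  · have := inv_strictAnti₀ hpos coxf_tsum_ub
    rw [show ((1:ℝ)/1.27)⁻¹ = 1.27 by norm_num] at this
    exact this
  · have := inv_strictAnti₀ (by norm_num : (0:ℝ) < 1/1.29) coxf_tsum_lb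
    rw [show ((1:ℝ)/1.29)⁻¹ = 1.29 by norm_num] at this
    exact this
end

section
/- With d₂(r) = 6α(r)(cosh r − 1)/(π − 6α(r)) where α(r) = arcsin(1/(2 cosh r)), one has d₂(r) < 3/π for every r > 0. -/
open Real

/-- Key inequality: `t² cos t < sin² t` for `t ∈ (0, 1]`. -/
lemma aux_sq_cos_lt_sin_sq {t : ℝ} (ht : 0 < t) (ht1 : t ≤ 1) :
    t ^ 2 * Real.cos t < Real.sin t ^ 2 := by
  have hs : t - t ^ 3 / 4 < Real.sin t := by
    have := Real.sin_gt_sub_cube ht; nlinarith [pow_pos ht 3]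
  have hb := abs_le.1 (Real.cos_bound (by rwa [abs_of_pos ht]))
  rw [abs_of_pos ht] at hb
  have hc : Real.cos t ≤ 1 - t ^ 2 / 2 + t ^ 4 * (5 / 96) := by linarith [hb.2]
  have hpos : 0 < t - t ^ 3 / 4 := by nlinarith
  nlinarith [mul_pos hpos hpos, sq_nonneg t, sq_nonneg (t ^ 2), mul_pos ht ht,
    mul_lt_mul_of_pos_left hs hpos, sq_nonneg (t ^ 3)]

/-- The function `1/sin t − 1/t` is strictly increasing on `[a, π/6]` for `0 < a`. -/
lemma aux_mono {a : ℝ} (ha : 0 < a) (ha6 : a < π / 6) :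
    StrictMonoOn (fun t : ℝ => (Real.sin t)⁻¹ - t⁻¹) (Set.Icc a (π / 6)) := by
  have hπ : π < 3.15 := Real.pi_lt_d2
  have hπ0 : 0 < π := Real.pi_pos
  have hsinpos : ∀ t ∈ Set.Icc a (π / 6), Real.sin t ≠ 0 := by
    intro t htm
    exact ne_of_gt (Real.sin_pos_of_pos_of_lt_pi (lt_of_lt_of_le ha htm.1)
      (by nlinarith [htm.2]))
  apply strictMonoOn_of_deriv_pos (convex_Icc _ _)
  · apply ContinuousOn.sub
    · exact Real.continuous_sin.continuousOn.inv₀ hsinpos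
    · exact continuousOn_id.inv₀ (fun t htm => ne_of_gt (lt_of_lt_of_le ha htm.1))
  · intro t htm
    rw [interior_Icc] at htm
    have ht0 : 0 < t := lt_trans ha htm.1
    have ht1 : t ≤ 1 := by nlinarith [htm.2]
    have hsin : Real.sin t ≠ 0 :=
      hsinpos t ⟨le_of_lt htm.1, le_of_lt htm.2⟩
    have h1 : HasDerivAt (fun y : ℝ => (Real.sin y)⁻¹) (-Real.cos t / Real.sin t ^ 2) t :=
      (Real.hasDerivAt_sin t).inv hsin
    have h2 : HasDerivAt (fun y : ℝ => y⁻¹) (-1 / t ^ 2) t := by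
      rw [neg_div, one_div]; exact hasDerivAt_inv (ne_of_gt ht0)
    have h3 : HasDerivAt (fun y : ℝ => (Real.sin y)⁻¹ - y⁻¹)
        (-Real.cos t / Real.sin t ^ 2 - -1 / t ^ 2) t := h1.sub h2
    rw [h3.deriv]
    have hkey := aux_sq_cos_lt_sin_sq ht0 ht1
    have hs2 : 0 < Real.sin t ^ 2 := by positivity
    have ht2 : 0 < t ^ 2 := by positivity
    have heq : -Real.cos t / Real.sin t ^ 2 - -1 / t ^ 2
        = (Real.sin t ^ 2 - t ^ 2 * Real.cos t) / (Real.sin t ^ 2 * t ^ 2) := by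
      field_simp
      ring
    rw [heq]
    exact div_pos (by linarith) (by positivity)

/-- With `d₂(r) = 6α(r)(cosh r − 1)/(π − 6α(r))`, `α(r) = arcsin(1/(2 cosh r))`, the local
hyperbolic circle-packing density bound satisfies `d₂(r) < 3/π` for every `r > 0`. -/
theorem hyperbolic_local_density_lt_horocycle_bound (r : ℝ) (hr : 0 < r) :
    6 * Real.arcsin (1 / (2 * Real.cosh r)) * (Real.cosh r - 1) /
      (π - 6 * Real.arcsin (1 / (2 * Real.cosh r))) < 3 / π := by
  have hπ0 : 0 < π := Real.pi_pos
  set c := Real.cosh r with hc_def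
  have hc : 1 < c := Real.one_lt_cosh.2 (ne_of_gt hr)
  set x : ℝ := 1 / (2 * c) with hx_def
  have hx0 : 0 < x := by positivity
  have hx2 : x < 1 / 2 := by
    rw [hx_def]
    rw [div_lt_div_iff₀ (by linarith) (by norm_num)]
    linarith
  set a : ℝ := Real.arcsin x with ha_def
  have ha0 : 0 < a := Real.arcsin_pos.2 hx0
  have harc6 : Real.arcsin (1 / 2) = π / 6 := by
    rw [show (1 : ℝ) / 2 = Real.sin (π / 6) from Real.sin_pi_div_six.symm,
      Real.arcsin_sin (by linarith) (by linarith)]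
  have ha6 : a < π / 6 := by
    rw [ha_def, ← harc6]
    exact Real.strictMonoOn_arcsin ⟨by linarith, by linarith⟩
      ⟨by norm_num, by norm_num⟩ hx2
  have hsina : Real.sin a = x := Real.sin_arcsin (by linarith) (by linarith)
  have hmono := aux_mono ha0 ha6
  have hlt := hmono (Set.left_mem_Icc.2 (le_of_lt ha6))
    (Set.right_mem_Icc.2 (le_of_lt ha6)) ha6
  simp only [hsina, Real.sin_pi_div_six] at hlt
  -- hlt : x⁻¹ - a⁻¹ < (1/2)⁻¹ - (π/6)⁻¹
  have hxinv : x⁻¹ = 2 * c := by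
    rw [hx_def]; field_simp
  have hkey : 2 * c - a⁻¹ < 2 - 6 / π := by
    rw [← hxinv]
    have : ((1 : ℝ) / 2)⁻¹ - (π / 6)⁻¹ = 2 - 6 / π := by
      field_simp
    linarith [hlt, this ▸ hlt]
  -- multiply by a * π > 0
  have haπ : 0 < a * π := mul_pos ha0 hπ0
  have hmul := mul_lt_mul_of_pos_right hkey haπ
  have hainv : a⁻¹ * a = 1 := inv_mul_cancel₀ (ne_of_gt ha0)
  have hπinv : 6 / π * π = 6 := div_mul_cancel₀ 6 (ne_of_gt hπ0)
  have hstep : 2 * c * a * π - π < 2 * a * π - 6 * a := by nlinarith [hmul]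
  rw [div_lt_div_iff₀ (by linarith) hπ0]
  nlinarith [hstep]
end

section
/- A convex region in the Euclidean plane containing a unit disk and contained in the Dirichlet cell of a unit circle packing (equivalently, any convex polygon with at most 6 sides circumscribed about the unit disk) has area at least 2√3, the area of the regular circumscribed hexagon. -/
open Metric MeasureTheory Set Real
open scoped RealInnerProductSpace ENNReal

theorem my_lintegral_comp_polarCoord_symm (f : ℝ × ℝ → ℝ≥0∞) :
    (∫⁻ p in polarCoord.target, ENNReal.ofReal p.1 * f (polarCoord.symm p)) = ∫⁻ p, f p := by
  set B : ℝ × ℝ → ℝ × ℝ →L[ℝ] ℝ × ℝ := fun p =>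
    LinearMap.toContinuousLinearMap (Matrix.toLin (Module.Basis.finTwoProd ℝ) (Module.Basis.finTwoProd ℝ)
      !![Real.cos p.2, -p.1 * Real.sin p.2; Real.sin p.2, p.1 * Real.cos p.2])
  have B_det : ∀ p, (B p).det = p.1 := by
    intro p
    conv_rhs => rw [← one_mul p.1, ← Real.cos_sq_add_sin_sq p.2]
    simp only [B, neg_mul, LinearMap.det_toContinuousLinearMap, LinearMap.det_toLin,
      Matrix.det_fin_two_of, sub_neg_eq_add]
    ring
  symm
  calc
    ∫⁻ p, f p = ∫⁻ p in polarCoord.source, f p := by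
      rw [← setLIntegral_univ]
      exact setLIntegral_congr polarCoord_source_ae_eq_univ.symm
    _ = ∫⁻ p in polarCoord.symm '' polarCoord.target, f p := by
      rw [polarCoord.symm_image_target_eq_source]
    _ = ∫⁻ p in polarCoord.target, ENNReal.ofReal |(B p).det| * f (polarCoord.symm p) := by
      apply lintegral_image_eq_lintegral_abs_det_fderiv_mul volume
        polarCoord.open_target.measurableSet
        (fun p _ => (hasFDerivAt_polarCoord_symm p).hasFDerivWithinAt)
        polarCoord.symm.injOn
    _ = ∫⁻ p in polarCoord.target, ENNReal.ofReal p.1 * f (polarCoord.symm p) := by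
      apply setLIntegral_congr_fun polarCoord.open_target.measurableSet
      intro p hp
      dsimp only
      rw [B_det, abs_of_pos hp.1]

lemma ofReal_eq_ofReal_max (x : ℝ) : ENNReal.ofReal x = ENNReal.ofReal (max x 0) := by
  rcases le_total x 0 with h | h
  · rw [ENNReal.ofReal_of_nonpos h, max_eq_right h, ENNReal.ofReal_zero]
  · rw [max_eq_left h]

lemma cos_window {w x : ℝ} (hw : w ∈ Icc 0 π) (hx : x ∈ Icc (-(2*π)) (2*π))
    (h : Real.cos w ≤ Real.cos x) : |x| ≤ w ∨ 2*π - w ≤ |x| := by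
  have hπ := Real.pi_pos
  obtain ⟨hw0, hwπ⟩ := hw
  have hax : |x| ∈ Icc 0 (2*π) := ⟨abs_nonneg x, abs_le.2 ⟨hx.1, hx.2⟩⟩
  have hcx : Real.cos |x| = Real.cos x := by
    rcases abs_cases x with ⟨h1, _⟩ | ⟨h1, _⟩
    · rw [h1]
    · rw [h1, Real.cos_neg]
  rcases le_or_gt |x| π with hle | hgt
  · left
    by_contra hc
    push_neg at hc
    have := Real.strictAntiOn_cos ⟨hw0, hwπ⟩ ⟨hax.1, hle⟩ hc
    rw [hcx] at this; linarith
  · right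
    by_contra hc
    push_neg at hc
    have h2 : Real.cos (2*π - |x|) = Real.cos x := by
      rw [Real.cos_two_pi_sub, hcx]
    have := Real.strictAntiOn_cos (a := w) (b := 2*π - |x|) ⟨hw0, hwπ⟩
      ⟨by linarith, by linarith⟩ (by linarith)
    rw [h2] at this; linarith

lemma arc_measure {φ w : ℝ} (hφ : φ ∈ Ioc (-π) π) (hw : w ∈ Icc 0 π) :
    volume {θ ∈ Ioo (-π) π | Real.cos w ≤ Real.cos (θ - φ)} ≤ ENNReal.ofReal (2*w) := by
  have hπ := Real.pi_pos
  obtain ⟨hw0, hwπ⟩ := hw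
  obtain ⟨hφ1, hφ2⟩ := hφ
  have hsub : {θ ∈ Ioo (-π) π | Real.cos w ≤ Real.cos (θ - φ)} ⊆
      (Icc (max (φ - w) (-π)) (min (φ + w) π)) ∪ Icc (φ + 2*π - w) π ∪ Icc (-π) (φ - 2*π + w) := by
    rintro θ ⟨hθ, hcos⟩
    have hx : θ - φ ∈ Icc (-(2*π)) (2*π) := by
      constructor <;> [linarith [hθ.1]; linarith [hθ.2]]
    rcases cos_window ⟨hw0, hwπ⟩ hx hcos with h | h
    · rw [abs_le] at h
      exact Or.inl (Or.inl ⟨max_le (by linarith [h.1]) hθ.1.le, le_min (by linarith [h.2]) hθ.2.le⟩)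
    · rcases abs_cases (θ - φ) with ⟨h1, _⟩ | ⟨h1, _⟩
      · rw [h1] at h
        exact Or.inl (Or.inr ⟨by linarith, hθ.2.le⟩)
      · rw [h1] at h
        exact Or.inr ⟨hθ.1.le, by linarith⟩
  calc volume {θ ∈ Ioo (-π) π | Real.cos w ≤ Real.cos (θ - φ)}
      ≤ _ := measure_mono hsub
    _ ≤ volume (Icc (max (φ - w) (-π)) (min (φ + w) π)) + volume (Icc (φ + 2*π - w) π)
        + volume (Icc (-π) (φ - 2*π + w)) := by
        exact (measure_union_le _ _).trans (add_le_add_left (measure_union_le _ _) _)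
    _ ≤ ENNReal.ofReal (2*w) := by
      rw [Real.volume_Icc, Real.volume_Icc, Real.volume_Icc,
        ofReal_eq_ofReal_max (min (φ + w) π - max (φ - w) (-π)),
        ofReal_eq_ofReal_max (π - (φ + 2*π - w)), ofReal_eq_ofReal_max (φ - 2*π + w - -π),
        ← ENNReal.ofReal_add (le_max_right _ 0) (le_max_right _ 0),
        ← ENNReal.ofReal_add (by positivity) (le_max_right _ 0)]
      apply ENNReal.ofReal_le_ofReal
      simp only [max_def, min_def]
      split_ifs <;> linarith

lemma lint_id {a : ℝ} (ha : 0 ≤ a) :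
    ∫⁻ r in Ioc 0 a, ENNReal.ofReal r = ENNReal.ofReal (a^2/2) := by
  rw [← ofReal_integral_eq_lintegral_ofReal]
  · rw [← intervalIntegral.integral_of_le ha, integral_id]
    norm_num
  · exact (continuous_id.integrableOn_Ioc (μ := volume))
  · filter_upwards [self_mem_ae_restrict measurableSet_Ioc] with x hx
    exact hx.1.le

lemma cos_div12_pos {s : ℝ} (h0 : 0 ≤ s) (h1 : s ≤ 2*π) : 0 < Real.cos (s/12) := by
  have hπ := Real.pi_pos
  apply Real.cos_pos_of_mem_Ioo
  constructor <;> [linarith; linarith]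

lemma ftc_tan : ∫ s in (0:ℝ)..(2*π), (1/(2 * Real.cos (s/12)^2)) = 2 * Real.sqrt 3 := by
  have hπ := Real.pi_pos
  have key : ∀ s ∈ Set.uIcc (0:ℝ) (2*π), HasDerivAt (fun x => 6 * Real.tan (x/12))
      (1/(2 * Real.cos (s/12)^2)) s := by
    intro s hs
    rw [Set.uIcc_of_le (by linarith)] at hs
    have hcos : Real.cos (s/12) ≠ 0 := (cos_div12_pos hs.1 hs.2).ne'
    have h1 : HasDerivAt (fun x : ℝ => x/12) (1/12) s := by
      simpa using (hasDerivAt_id s).div_const 12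
    have h2 := (Real.hasDerivAt_tan hcos).comp s h1
    have h3 := h2.const_mul (6:ℝ)
    refine h3.congr_deriv ?_
    field_simp
    ring
  rw [intervalIntegral.integral_eq_sub_of_hasDerivAt key ?int]
  · rw [show (2*π)/12 = π/6 by ring, Real.tan_pi_div_six]
    have h3 : (0:ℝ) < Real.sqrt 3 := Real.sqrt_pos.2 (by norm_num)
    rw [show (0:ℝ)/12 = 0 by ring, Real.tan_zero]
    field_simp
    nlinarith [Real.sq_sqrt (show (0:ℝ) ≤ 3 by norm_num)]
  case int =>
    apply ContinuousOn.intervalIntegrable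
    apply ContinuousOn.div continuousOn_const
    · fun_prop
    · intro s hs
      rw [Set.uIcc_of_le (by linarith)] at hs
      have := cos_div12_pos hs.1 hs.2
      positivity

lemma sqrt3_lt_two : Real.sqrt 3 < 2 := by
  nlinarith [Real.sq_sqrt (show (0:ℝ) ≤ 3 by norm_num), Real.sqrt_nonneg 3]

lemma sqrt3_pos : (0:ℝ) < Real.sqrt 3 := Real.sqrt_pos.2 (by norm_num)

lemma cos_pi_div_six' : Real.cos (π/6) = Real.sqrt 3 / 2 := Real.cos_pi_div_six

section main
variable (φ : Fin 6 → ℝ)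

noncomputable def cc (θ : ℝ) : ℝ :=
  Finset.univ.sup' Finset.univ_nonempty (fun i => Real.cos (θ - φ i))

noncomputable def mm (θ : ℝ) : ℝ := max (cc φ θ) (Real.sqrt 3 / 2)

noncomputable def ff (θ : ℝ) : ℝ := (1 / mm φ θ)^2 / 2

lemma mm_pos (θ : ℝ) : 0 < mm φ θ := lt_of_lt_of_le (by positivity) (le_max_right _ _)

lemma mm_le_one (θ : ℝ) : mm φ θ ≤ 1 := by
  apply max_le
  · exact Finset.sup'_le _ _ (fun i _ => Real.cos_le_one _)
  · linarith [sqrt3_lt_two]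

lemma ff_ge_half (θ : ℝ) : 1/2 ≤ ff φ θ := by
  have h1 := mm_pos φ θ
  have h2 := mm_le_one φ θ
  rw [ff, div_pow, one_pow]
  have hm2 : mm φ θ^2 ≤ 1 := by nlinarith
  have h3 : (1:ℝ) ≤ 1 / mm φ θ^2 := by
    rw [le_div_iff₀ (by positivity)]; linarith
  linarith

lemma ff_cont : Continuous (ff φ) := by
  have hc : Continuous (cc φ) :=
    Continuous.finset_sup'_apply Finset.univ_nonempty
      (fun i _ => by fun_prop)
  have hm : Continuous (mm φ) := hc.max continuous_const
  have h1 : Continuous fun θ => (1 / mm φ θ) :=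
    continuous_const.div hm (fun θ => (mm_pos φ θ).ne')
  unfold ff
  exact ((h1.pow 2).div_const 2)

end main

noncomputable def gg (s : ℝ) : ℝ := 1/(2 * Real.cos (s/12)^2)

lemma gg_meas : Measurable gg := by
  unfold gg; fun_prop



lemma layer (φ : Fin 6 → ℝ) (hφ : ∀ i, φ i ∈ Ioc (-π) π) :
    ENNReal.ofReal (2 * Real.sqrt 3) ≤ ∫⁻ θ in Ioo (-π) π, ENNReal.ofReal (ff φ θ) := by
  have hπ := Real.pi_pos
  -- step A : LHS as lintegral of gg
  have hggcont : ContinuousOn gg (Icc 0 (2*π)) := by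
    apply ContinuousOn.div continuousOn_const (by fun_prop)
    intro s hs
    have h1 : 0 < Real.cos (s/12) := by
      apply Real.cos_pos_of_mem_Ioo
      constructor <;> [linarith [hs.1]; linarith [hs.2]]
    positivity
  have hA : ∫⁻ s in Ioo 0 (2*π), ENNReal.ofReal (gg s) = ENNReal.ofReal (2 * Real.sqrt 3) := by
    rw [← ofReal_integral_eq_lintegral_ofReal]
    · congr 1
      rw [← MeasureTheory.integral_Ioc_eq_integral_Ioo,
        ← intervalIntegral.integral_of_le (by linarith)]
      exact ftc_tan
    · exact (hggcont.integrableOn_Icc).mono_set Ioo_subset_Icc_self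
    · filter_upwards with s
      unfold gg
      positivity
  -- step B : layercake both sides
  have hBf : ∫⁻ θ in Ioo (-π) π, ENNReal.ofReal (ff φ θ)
      = ∫⁻ t in Ioi 0, (volume.restrict (Ioo (-π) π)) {θ | t < ff φ θ} :=
    lintegral_eq_lintegral_meas_lt _ (ae_of_all _ (fun θ => by show (0:ℝ) ≤ ff φ θ; linarith [ff_ge_half φ θ]))
      (ff_cont φ).aemeasurable
  have hBg : ∫⁻ s in Ioo 0 (2*π), ENNReal.ofReal (gg s)
      = ∫⁻ t in Ioi 0, (volume.restrict (Ioo 0 (2*π))) {s | t < gg s} :=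
    lintegral_eq_lintegral_meas_lt _ (ae_of_all _ (fun s => by show (0:ℝ) ≤ gg s; unfold gg; positivity))
      gg_meas.aemeasurable
  rw [← hA, hBf, hBg]
  -- step C : pointwise distribution comparison
  apply lintegral_mono
  intro t
  dsimp only
  rw [Measure.restrict_apply (measurableSet_lt measurable_const gg_meas),
    Measure.restrict_apply (measurableSet_lt measurable_const (ff_cont φ).measurable)]
  rcases lt_or_ge t (1/2 : ℝ) with ht | ht
  · -- t < 1/2 : both sides are full
    have hR : {θ | t < ff φ θ} ∩ Ioo (-π) π = Ioo (-π) π := by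
      apply inter_eq_right.2
      intro θ _
      exact lt_of_lt_of_le ht (ff_ge_half φ θ)
    rw [hR]
    calc volume ({s | t < gg s} ∩ Ioo 0 (2*π)) ≤ volume (Ioo 0 (2*π)) :=
          measure_mono inter_subset_right
      _ ≤ volume (Ioo (-π) π) := by
          rw [Real.volume_Ioo, Real.volume_Ioo]
          apply ENNReal.ofReal_le_ofReal
          linarith
  · -- 1/2 ≤ t
    have ht0 : (0:ℝ) < t := by linarith
    have h2t : (1:ℝ) ≤ 2*t := by linarith
    have hsq : (1:ℝ) ≤ Real.sqrt (2*t) := by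
      rw [show (1:ℝ) = Real.sqrt 1 by rw [Real.sqrt_one]]
      exact Real.sqrt_le_sqrt h2t
    set q : ℝ := 1/Real.sqrt (2*t) with hq_def
    have hq0 : 0 < q := by positivity
    have hq1 : q ≤ 1 := by rw [hq_def, div_le_one (by linarith)]; exact hsq
    set w : ℝ := Real.arccos q with hw_def
    have hw_mem : w ∈ Icc 0 π := ⟨Real.arccos_nonneg q, Real.arccos_le_pi q⟩
    have hcw : Real.cos w = q := Real.cos_arccos (by linarith) hq1
    have hq2 : q^2 = 1/(2*t) := by
      rw [hq_def, div_pow, one_pow, Real.sq_sqrt (by linarith)]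
    -- LHS bound
    have hL : volume ({s | t < gg s} ∩ Ioo 0 (2*π)) ≤ ENNReal.ofReal (2*π - 12*w) := by
      have hsub : {s | t < gg s} ∩ Ioo 0 (2*π) ⊆ Ioo (12*w) (2*π) := by
        rintro s ⟨hts, hs⟩
        refine ⟨?_, hs.2⟩
        by_contra hcon
        push_neg at hcon
        have hs12 : s/12 ≤ w := by linarith
        have hs12' : (0:ℝ) ≤ s/12 := by linarith [hs.1]
        have hcc : Real.cos w ≤ Real.cos (s/12) :=
          Real.cos_le_cos_of_nonneg_of_le_pi hs12' hw_mem.2 hs12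
        rw [hcw] at hcc
        have hd0 : 0 < Real.cos (s/12) := by linarith
        have hq2' : 2*t*q^2 = 1 := by
          rw [hq2]; field_simp
        have h5 : t*q^2 ≤ t*Real.cos (s/12)^2 :=
          mul_le_mul_of_nonneg_left (by nlinarith) ht0.le
        have : gg s ≤ t := by
          rw [gg, div_le_iff₀ (by positivity)]
          nlinarith
        rw [mem_setOf_eq] at hts
        linarith
      calc volume ({s | t < gg s} ∩ Ioo 0 (2*π)) ≤ volume (Ioo (12*w) (2*π)) :=
            measure_mono hsub
        _ = ENNReal.ofReal (2*π - 12*w) := Real.volume_Ioo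
    refine hL.trans ?_
    -- RHS bound
    rcases le_or_gt q (Real.sqrt 3 / 2) with hqs | hqs
    · -- w ≥ π/6, so the bound is trivial
      have hw6 : π/6 ≤ w := by
        by_contra hcon
        push_neg at hcon
        have h1 := Real.strictAntiOn_cos (a := w) (b := π/6)
          ⟨hw_mem.1, hw_mem.2⟩ ⟨by positivity, by linarith⟩ hcon
        rw [hcw, Real.cos_pi_div_six] at h1
        linarith
      rw [ENNReal.ofReal_eq_zero.2 (by linarith)]
      exact zero_le'
    · -- covering argument
      have hcover : Ioo (-π) π ⊆ ({θ | t < ff φ θ} ∩ Ioo (-π) π)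
          ∪ (⋃ i, {θ ∈ Ioo (-π) π | Real.cos w ≤ Real.cos (θ - φ i)}) := by
        intro θ hθ
        rcases lt_or_ge t (ff φ θ) with h | h
        · exact Or.inl ⟨h, hθ⟩
        · right
          have hmq : q ≤ mm φ θ := by
            by_contra hcon
            push_neg at hcon
            have hm0 := mm_pos φ θ
            have h6 : mm φ θ^2 < q^2 := by nlinarith
            have h7 : 1/q^2 < 1/(mm φ θ^2) := one_div_lt_one_div_of_lt (by positivity) h6
            have h8 : 1/q^2 = 2*t := by rw [hq2, one_div_one_div]
            have : t < ff φ θ := by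
              rw [ff, div_pow, one_pow, lt_div_iff₀ (by norm_num)]
              linarith
            linarith
          have hcq : q ≤ cc φ θ := by
            rcases le_max_iff.1 hmq with h' | h'
            · exact h'
            · linarith
          obtain ⟨i, _, hi⟩ := Finset.exists_mem_eq_sup' (Finset.univ_nonempty)
            (fun i => Real.cos (θ - φ i))
          refine mem_iUnion.2 ⟨i, hθ, ?_⟩
          rw [hcw]
          rw [cc] at hcq
          rw [hi] at hcq
          exact hcq
      have hsum : volume (⋃ i, {θ ∈ Ioo (-π) π | Real.cos w ≤ Real.cos (θ - φ i)})
          ≤ ENNReal.ofReal (12*w) := by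
        calc volume (⋃ i, {θ ∈ Ioo (-π) π | Real.cos w ≤ Real.cos (θ - φ i)})
            ≤ ∑' i : Fin 6, volume {θ ∈ Ioo (-π) π | Real.cos w ≤ Real.cos (θ - φ i)} :=
              measure_iUnion_le _
          _ ≤ ∑' _i : Fin 6, ENNReal.ofReal (2*w) :=
              ENNReal.tsum_le_tsum (fun i => arc_measure (hφ i) hw_mem)
          _ = 6 * ENNReal.ofReal (2*w) := by
              rw [tsum_fintype, Finset.sum_const, Finset.card_univ, Fintype.card_fin,
                nsmul_eq_mul]
              norm_num
          _ = ENNReal.ofReal (12*w) := by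
              rw [show (6:ℝ≥0∞) = ENNReal.ofReal 6 by simp, ← ENNReal.ofReal_mul (by norm_num)]
              congr 1
              ring
      have hfull : ENNReal.ofReal (2*π) ≤ volume ({θ | t < ff φ θ} ∩ Ioo (-π) π)
          + ENNReal.ofReal (12*w) := by
        calc ENNReal.ofReal (2*π) = volume (Ioo (-π) π) := by
              rw [Real.volume_Ioo]; congr 1; ring
          _ ≤ volume (({θ | t < ff φ θ} ∩ Ioo (-π) π)
              ∪ (⋃ i, {θ ∈ Ioo (-π) π | Real.cos w ≤ Real.cos (θ - φ i)})) :=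
              measure_mono hcover
          _ ≤ _ := (measure_union_le _ _).trans (add_le_add_right hsum _)
      rw [ENNReal.ofReal_sub _ (by linarith [hw_mem.1])]
      rw [tsub_le_iff_right]
      exact hfull

lemma mm_cont (φ : Fin 6 → ℝ) : Continuous (mm φ) :=
  (Continuous.finset_sup'_apply Finset.univ_nonempty (fun i _ => by fun_prop)).max
    continuous_const

theorem polygon_bound (φ : Fin 6 → ℝ) (hφ : ∀ i, φ i ∈ Ioc (-π) π) :
    ENNReal.ofReal (2 * Real.sqrt 3)
      ≤ volume {p : ℝ × ℝ | ∀ i, p.1 * Real.cos (φ i) + p.2 * Real.sin (φ i) ≤ 1} := by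
  have hπ := Real.pi_pos
  set K : Set (ℝ × ℝ) := {p | ∀ i, p.1 * Real.cos (φ i) + p.2 * Real.sin (φ i) ≤ 1} with hK_def
  have hKc : IsClosed K := by
    have : K = ⋂ i, {p : ℝ × ℝ | p.1 * Real.cos (φ i) + p.2 * Real.sin (φ i) ≤ 1} := by
      ext p; simp [hK_def]
    rw [this]
    exact isClosed_iInter (fun i => isClosed_le (by fun_prop) continuous_const)
  have hKm : MeasurableSet K := hKc.measurableSet
  have hvol : volume K = ∫⁻ p, K.indicator (1 : ℝ × ℝ → ℝ≥0∞) p :=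
    (lintegral_indicator_one hKm).symm
  -- the comparison function on polar coordinates
  set S : Set (ℝ × ℝ) := {p | 0 < p.1 ∧ p.1 ≤ 1 / mm φ p.2} with hS_def
  have hSm : MeasurableSet S := by
    apply MeasurableSet.inter
    · exact measurableSet_lt measurable_const measurable_fst
    · exact measurableSet_le measurable_fst
        ((continuous_const.div (mm_cont φ) (fun θ => (mm_pos φ θ).ne')).comp
          continuous_snd).measurable
  have key : ∫⁻ p in polarCoord.target, ENNReal.ofReal p.1 * S.indicator 1 p
      ≤ ∫⁻ p in polarCoord.target, ENNReal.ofReal p.1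
          * K.indicator (1 : ℝ × ℝ → ℝ≥0∞) (polarCoord.symm p) := by
    apply setLIntegral_mono
    · apply Measurable.mul measurable_fst.ennreal_ofReal
      apply Measurable.comp (measurable_one.indicator hKm)
      have : Continuous (fun p : ℝ × ℝ => polarCoord.symm p) := by
        have : (fun p : ℝ × ℝ => polarCoord.symm p)
            = fun p => (p.1 * Real.cos p.2, p.1 * Real.sin p.2) := by
          funext p; exact polarCoord_symm_apply p
        rw [this]; fun_prop
      exact this.measurable
    · rintro ⟨r, θ⟩ hp
      rcases (em ((r, θ) ∈ S)) with hS | hS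
      · have hmem : polarCoord.symm (r, θ) ∈ K := by
          rw [polarCoord_symm_apply]
          intro i
          dsimp only
          have h1 : Real.cos θ * Real.cos (φ i) + Real.sin θ * Real.sin (φ i)
              = Real.cos (θ - φ i) := (Real.cos_sub θ (φ i)).symm
          have h2 : Real.cos (θ - φ i) ≤ mm φ θ :=
            le_trans (Finset.le_sup' (fun j => Real.cos (θ - φ j)) (Finset.mem_univ i))
              (le_max_left _ _)
          have hr0 : 0 < r := hS.1
          have hrm : r * mm φ θ ≤ 1 := by
            have := hS.2
            rw [le_div_iff₀ (mm_pos φ θ)] at this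
            exact this
          calc r * Real.cos θ * Real.cos (φ i) + r * Real.sin θ * Real.sin (φ i)
              = r * Real.cos (θ - φ i) := by rw [← h1]; ring
            _ ≤ r * mm φ θ := mul_le_mul_of_nonneg_left h2 hr0.le
            _ ≤ 1 := hrm
        rw [Set.indicator_of_mem hS, Set.indicator_of_mem hmem]
        simp
      · rw [Set.indicator_of_notMem hS, mul_zero]
        exact zero_le'
  have hpolar := my_lintegral_comp_polarCoord_symm (K.indicator (1 : ℝ × ℝ → ℝ≥0∞))
  -- compute the lower bound integral
  have hlow : ∫⁻ θ in Ioo (-π) π, ENNReal.ofReal (ff φ θ)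
      = ∫⁻ p in polarCoord.target, ENNReal.ofReal p.1 * S.indicator 1 p := by
    rw [polarCoord_target]
    rw [Measure.volume_eq_prod, ← Measure.prod_restrict]
    rw [lintegral_prod_symm (fun p : ℝ × ℝ => ENNReal.ofReal p.1 * S.indicator 1 p) ((measurable_fst.ennreal_ofReal.mul
      (measurable_one.indicator hSm)).aemeasurable)]
    refine lintegral_congr fun θ => ?_
    symm
    have hinner : ∀ r : ℝ, ENNReal.ofReal r * S.indicator 1 (r, θ)
        = (Ioc 0 (1 / mm φ θ)).indicator (fun r => ENNReal.ofReal r) r := by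
      intro r
      rcases em (r ∈ Ioc 0 (1 / mm φ θ)) with h | h
      · rw [Set.indicator_of_mem h, Set.indicator_of_mem (show (r,θ) ∈ S from ⟨h.1, h.2⟩)]
        rw [Pi.one_apply, mul_one]
      · rw [Set.indicator_of_notMem h, Set.indicator_of_notMem
          (show (r,θ) ∉ S from fun hc => h ⟨hc.1, hc.2⟩), mul_zero]
    calc ∫⁻ r in Ioi 0, ENNReal.ofReal r * S.indicator 1 (r, θ)
        = ∫⁻ r in Ioi 0, (Ioc 0 (1 / mm φ θ)).indicator (fun r => ENNReal.ofReal r) r := by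
          exact lintegral_congr (fun r => hinner r)
      _ = ∫⁻ r in Ioc 0 (1 / mm φ θ) ∩ Ioi 0, ENNReal.ofReal r := by
          rw [lintegral_indicator measurableSet_Ioc, Measure.restrict_restrict measurableSet_Ioc]
      _ = ∫⁻ r in Ioc 0 (1 / mm φ θ), ENNReal.ofReal r := by
          rw [Set.inter_eq_left.2 (fun r hr => hr.1)]
      _ = ENNReal.ofReal (ff φ θ) := by
          rw [lint_id (one_div_pos.2 (mm_pos φ θ)).le]
          rfl
  calc ENNReal.ofReal (2 * Real.sqrt 3) ≤ ∫⁻ θ in Ioo (-π) π, ENNReal.ofReal (ff φ θ) :=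
        layer φ hφ
    _ = ∫⁻ p in polarCoord.target, ENNReal.ofReal p.1 * S.indicator 1 p := hlow
    _ ≤ ∫⁻ p in polarCoord.target, ENNReal.ofReal p.1
          * K.indicator (1 : ℝ × ℝ → ℝ≥0∞) (polarCoord.symm p) := key
    _ = ∫⁻ p, K.indicator (1 : ℝ × ℝ → ℝ≥0∞) p := hpolar
    _ = volume K := hvol.symm

/-- A convex region of the Euclidean plane that is an intersection of at most `6` half-planes
(a convex polygon with at most six sides) and contains the unit disk has area at least
`2√3`, the area of the regular hexagon circumscribed about the unit circle. -/
theorem hexagon_isoperimetric_cell_bound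
    (u : Fin 6 → EuclideanSpace ℝ (Fin 2)) (hu : ∀ i, ‖u i‖ = 1) (b : Fin 6 → ℝ)
    (K : Set (EuclideanSpace ℝ (Fin 2)))
    (hK : K = ⋂ i : Fin 6, {x : EuclideanSpace ℝ (Fin 2) | ⟪x, u i⟫ ≤ b i})
    (hball : ball (0 : EuclideanSpace ℝ (Fin 2)) 1 ⊆ K) :
    ENNReal.ofReal (2 * Real.sqrt 3) ≤ volume K := by
  -- each b i is at least 1
  have hb : ∀ i, 1 ≤ b i := by
    intro i
    have hhalf : K ⊆ {x : EuclideanSpace ℝ (Fin 2) | ⟪x, u i⟫ ≤ b i} := by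
      rw [hK]; exact iInter_subset _ i
    have hcl : IsClosed {x : EuclideanSpace ℝ (Fin 2) | ⟪x, u i⟫ ≤ b i} :=
      isClosed_le (Continuous.inner continuous_id continuous_const) continuous_const
    have hsub : closedBall (0 : EuclideanSpace ℝ (Fin 2)) 1
        ⊆ {x | ⟪x, u i⟫ ≤ b i} := by
      rw [← closure_ball (0 : EuclideanSpace ℝ (Fin 2)) one_ne_zero]
      exact closure_minimal (hball.trans hhalf) hcl
    have hui : u i ∈ closedBall (0 : EuclideanSpace ℝ (Fin 2)) 1 := by
      rw [mem_closedBall_zero_iff, hu i]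
    have := hsub hui
    rw [mem_setOf_eq, real_inner_self_eq_norm_sq, hu i] at this
    linarith
  -- K contains the canonical polygon
  set K₁ : Set (EuclideanSpace ℝ (Fin 2)) := {x | ∀ i, ⟪x, u i⟫ ≤ 1} with hK₁_def
  have hK₁K : K₁ ⊆ K := by
    rw [hK]
    intro x hx
    exact mem_iInter.2 fun i => le_trans (hx i) (hb i)
  have hK₁m : MeasurableSet K₁ := by
    have : K₁ = ⋂ i, {x : EuclideanSpace ℝ (Fin 2) | ⟪x, u i⟫ ≤ 1} := by
      ext x; simp [hK₁_def]
    rw [this]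
    exact MeasurableSet.iInter fun i =>
      (isClosed_le (Continuous.inner continuous_id continuous_const) continuous_const).measurableSet
  refine le_trans ?_ (measure_mono hK₁K)
  -- transfer to ℝ × ℝ
  set T : EuclideanSpace ℝ (Fin 2) ≃ᵐ ℝ × ℝ :=
    (MeasurableEquiv.toLp 2 (Fin 2 → ℝ)).symm.trans MeasurableEquiv.finTwoArrow with hT_def
  have hTmp : MeasurePreserving T.symm volume volume :=
    ((MeasureTheory.volume_preserving_finTwoArrow ℝ).comp
      (EuclideanSpace.volume_preserving_symm_measurableEquiv_toLp (Fin 2))).symm _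
  have hvol : volume (T.symm ⁻¹' K₁) = volume K₁ := hTmp.measure_preimage hK₁m.nullMeasurableSet
  -- identify the preimage with the planar polygon
  have hpre : T.symm ⁻¹' K₁ = {p : ℝ × ℝ | ∀ i, p.1 * (u i 0) + p.2 * (u i 1) ≤ 1} := by
    ext p
    simp only [mem_preimage, hK₁_def, mem_setOf_eq]
    have hcoord : ∀ j : Fin 2, (T.symm p) j = ![p.1, p.2] j := by
      intro j
      rfl
    constructor <;> intro h i <;> have hi := h i
    · rw [PiLp.inner_apply] at hi
      simp only [RCLike.inner_apply, starRingEnd_apply, star_trivial, Fin.sum_univ_two,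
        hcoord] at hi
      simpa [mul_comm] using hi
    · rw [PiLp.inner_apply]
      simp only [RCLike.inner_apply, starRingEnd_apply, star_trivial, Fin.sum_univ_two, hcoord]
      simpa [mul_comm] using hi
  rw [← hvol, hpre]
  -- introduce the angles
  have hnormsq : ∀ i, (u i 0)^2 + (u i 1)^2 = 1 := by
    intro i
    have := hu i
    rw [EuclideanSpace.norm_eq] at this
    have h2 : Real.sqrt ((u i 0)^2 + (u i 1)^2) = 1 := by
      rw [← this]
      congr 1
      rw [Fin.sum_univ_two]
      simp [sq_abs]
    nlinarith [Real.sq_sqrt (show (0:ℝ) ≤ (u i 0)^2 + (u i 1)^2 by positivity)]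
  set z : Fin 6 → ℂ := fun i => ⟨u i 0, u i 1⟩ with hz_def
  have habs : ∀ i, ‖z i‖ = 1 := by
    intro i
    rw [Complex.norm_def, Complex.normSq_mk]
    rw [show (u i 0) * (u i 0) + (u i 1) * (u i 1) = (u i 0)^2 + (u i 1)^2 by ring, hnormsq i,
      Real.sqrt_one]
  have hz0 : ∀ i, z i ≠ 0 := fun i hc => by
    have := habs i; rw [hc] at this; simp at this
  set φ : Fin 6 → ℝ := fun i => Complex.arg (z i) with hφ_def
  have hcos : ∀ i, Real.cos (φ i) = u i 0 := by
    intro i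
    rw [hφ_def, Complex.cos_arg (hz0 i), habs i, div_one]
  have hsin : ∀ i, Real.sin (φ i) = u i 1 := by
    intro i
    rw [hφ_def, Complex.sin_arg, habs i, div_one]
  have hset : {p : ℝ × ℝ | ∀ i, p.1 * (u i 0) + p.2 * (u i 1) ≤ 1}
      = {p : ℝ × ℝ | ∀ i, p.1 * Real.cos (φ i) + p.2 * Real.sin (φ i) ≤ 1} := by
    ext p
    simp only [mem_setOf_eq]
    constructor <;> intro h i <;> have hi := h i
    · rw [hcos i, hsin i]; exact hi
    · rw [← hcos i, ← hsin i]; exact hi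
  rw [hset]
  exact polygon_bound φ (fun i => Complex.arg_mem_Ioc (z i))
end
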